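/- arXiv:2008.01938 — 3 statements merged into one kernel-verified Lean document; each statement's English description precedes it below -/
import Mathlib

section
/- In substep 2 of one execution of the inner loop of the MCM pipeline algorithm, no two distinct active threads read the same element of the linearized solution table ST. -/
/-- The triangular table `{(i,j) : 1 ≤ i ≤ j ≤ n}`. -/
def triT (n : ℕ) : Finset (ℕ × ℕ) :=
  ((Finset.Icc 1 n) ×ˢ (Finset.Icc 1 n)).filter (fun p => p.1 ≤ p.2)

/-- Diagonal-major order: first by chain length `j - i`, then by row `i`. -/
def dmLt (c d : ℕ × ℕ) : Prop :=
  c.2 - c.1 < d.2 - d.1 ∨ (c.2 - c.1 = d.2 - d.1 ∧ c.1 < d.1)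

/-- Substep 2 of the MCM pipeline inner loop: at outer step `i`, active
threads `p ≠ q` work on cells `σ⁻¹(i−p+1) = (rp,colp)` and
`σ⁻¹(i−q+1) = (rq,colq)` and read right operands `σ(rp+p, colp)` and
`σ(rq+q, colq)`; these read indices differ, i.e. no two distinct active
threads read the same element of `ST`. -/
theorem mcm_substep2_conflict_free (n : ℕ) (σ : ℕ × ℕ → ℕ)
    (hσ : Set.InjOn σ (triT n : Set (ℕ × ℕ)))
    (hmono : ∀ c ∈ triT n, ∀ d ∈ triT n, dmLt c d → σ c < σ d)
    (i p q rp colp rq colq : ℕ)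
    (hp : 1 ≤ p) (hq : 1 ≤ q) (hpq : p ≠ q)
    (hcp : (rp, colp) ∈ triT n) (hcq : (rq, colq) ∈ triT n)
    (hσp : σ (rp, colp) + p = i + 1) (hσq : σ (rq, colq) + q = i + 1)
    (hactp : p ≤ colp - rp) (hactq : q ≤ colq - rq)
    (hRp : (rp + p, colp) ∈ triT n) (hRq : (rq + q, colq) ∈ triT n) :
    σ (rp + p, colp) ≠ σ (rq + q, colq) := by
  intro h
  have hinj := hσ (by exact_mod_cast hRp) (by exact_mod_cast hRq) h
  have hr : rp + p = rq + q := congrArg Prod.fst hinj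
  have hc : colp = colq := congrArg Prod.snd hinj
  subst hc
  simp only [triT, Finset.mem_filter, Finset.mem_product, Finset.mem_Icc] at hcp hcq
  rcases lt_trichotomy rp rq with hlt | heq | hgt
  · have hdm : dmLt (rq, colp) (rp, colp) := by
      left; simp; omega
    have := hmono _ (by simpa [triT, Finset.mem_filter, Finset.mem_product, Finset.mem_Icc] using hcq)
      _ (by simpa [triT, Finset.mem_filter, Finset.mem_product, Finset.mem_Icc] using hcp) hdm
    omega
  · omega
  · have hdm : dmLt (rp, colp) (rq, colp) := by
      left; simp; omega
    have := hmono _ (by simpa [triT, Finset.mem_filter, Finset.mem_product, Finset.mem_Icc] using hcp)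
      _ (by simpa [triT, Finset.mem_filter, Finset.mem_product, Finset.mem_Icc] using hcq) hdm
    omega
end

section
/- For the S-DP pipeline algorithm, two distinct threads p < q read the same element of ST at the same step if and only if a_p − a_q = q − p; in particular, for strictly decreasing offsets this happens iff the sub-sequence a_p, a_{p+1}, …, a_q consists of consecutive integers (a_r = a_{r+1} + 1 for all p ≤ r < q). -/
/-- Gap lemma: for `1 ≤ s ≤ t ≤ k`, `a t + (t - s) ≤ a s`. -/
lemma sdp_gap (k : ℕ) (a : ℕ → ℤ)
    (hdec : ∀ m : ℕ, 1 ≤ m → m < k → a (m + 1) < a m) :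
    ∀ t s : ℕ, 1 ≤ s → s ≤ t → t ≤ k → a t + ((t : ℤ) - s) ≤ a s := by
  intro t
  induction t with
  | zero => intro s hs hst _; omega
  | succ n ih =>
    intro s hs hst htk
    rcases Nat.lt_or_ge s (n+1) with h | h
    · have h1 : a (n+1) < a n := hdec n (by omega) (by omega)
      have h2 := ih s hs (by omega) (by omega)
      push_cast
      push_cast at h2
      omega
    · have : s = n + 1 := by omega
      subst this
      omega

/-- In the S-DP pipeline (offsets `a 1 > ⋯ > a k > 0`, thread `j` reading
index `(i − j + 1) − a j`), threads `p < q` read the same element at the same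
step iff `a p − a q = q − p`, which for strictly decreasing offsets happens
iff the sub-sequence `a p, …, a q` consists of consecutive integers. -/
theorem sdp_conflict_iff_consecutive (k : ℕ) (a : ℕ → ℤ) (i : ℤ)
    (hpos : ∀ m : ℕ, 1 ≤ m → m ≤ k → 0 < a m)
    (hdec : ∀ m : ℕ, 1 ≤ m → m < k → a (m + 1) < a m)
    (p q : ℕ) (hp1 : 1 ≤ p) (hpq : p < q) (hqk : q ≤ k) :
    (((i - (p : ℤ) + 1) - a p = (i - (q : ℤ) + 1) - a q) ↔
        a p - a q = (q : ℤ) - (p : ℤ)) ∧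
    ((a p - a q = (q : ℤ) - (p : ℤ)) ↔
        ∀ r : ℕ, p ≤ r → r < q → a r = a (r + 1) + 1) := by
  constructor
  · constructor <;> intro h <;> omega
  · constructor
    · intro h r hpr hrq
      have h1 := sdp_gap k a hdec r p hp1 hpr (by omega)
      have h2 := sdp_gap k a hdec q (r+1) (by omega) (by omega) hqk
      have h3 : a (r+1) < a r := hdec r (by omega) (by omega)
      have hc : ((q : ℤ) - (r+1 : ℕ)) + ((r : ℕ) - (p:ℤ)) = (q:ℤ) - p - 1 := by
        push_cast; omega
      push_cast at h1 h2 ⊢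
      omega
    · intro h
      have key : ∀ d : ℕ, p + d ≤ q → a p - a (p + d) = (d : ℤ) := by
        intro d
        induction d with
        | zero => intro _; simp
        | succ n ih =>
          intro hd
          have h1 := ih (by omega)
          have h2 := h (p + n) (by omega) (by omega)
          have : p + (n+1) = (p + n) + 1 := by omega
          rw [this]
          push_cast at h1 h2 ⊢
          omega
      have := key (q - p) (by omega)
      have hq : p + (q - p) = q := by omega
      rw [hq] at this
      push_cast at this ⊢
      omega
end

section
/- Correctness of the S-DP pipeline schedule: in the pipeline algorithm, the value ST[m] (for a_1 ≤ m ≤ n−1) receives its j-th update (using offset a_j) at outer step i = m + j − 1, and after outer step m + k − 1 the value ST[m] equals the full fold ST[m−a_1] ⊗ ⋯ ⊗ ST[m−a_k]; moreover every read ST[m − a_j] performed at step m + j − 1 uses a value that was finalized at step (m − a_j) + k − 1 < m + j − 1, so all reads see finalized values. -/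
/-- Left-associated fold `x 1 ⊗ x 2 ⊗ ⋯ ⊗ x k`. -/
def loopST (op : ℤ → ℤ → ℤ) (x : ℕ → ℤ) : ℕ → ℤ
  | 0 => x 1
  | 1 => x 1
  | (j + 2) => op (loopST op x (j + 1)) (x (j + 2))

/-- Correctness of the S-DP pipeline schedule.  `St i` is the content of the
array `ST` after outer step `i`.  `hupd` says position `x` (with
`a 1 ≤ x < n`) receives its `j`-th update (using offset `a j`) at outer step
`i = x + j − 1`, by thread `j`; `hframe` says nothing else changes.  Then:
(1) the update of `ST[m]` by thread `j` at step `i = m + j − 1` indeed has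
`i − j + 1 = m`; (2) every read `ST[m − a j]` performed at step `m + j − 1`
uses a value finalized at step `(m − a j) + k − 1 < m + j − 1`; (3) after
outer step `m + k − 1` the value `ST[m]` equals the full fold
`ST[m−a 1] ⊗ ⋯ ⊗ ST[m−a k]`. -/
theorem sdp_pipeline_correct (op : ℤ → ℤ → ℤ)
    (hassoc : ∀ x y z : ℤ, op (op x y) z = op x (op y z))
    (n k : ℕ) (hk : 1 ≤ k) (a : ℕ → ℕ)
    (hpos : ∀ j : ℕ, 1 ≤ j → j ≤ k → 0 < a j)
    (hdec : ∀ j : ℕ, 1 ≤ j → j < k → a (j + 1) < a j)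
    (St : ℕ → ℕ → ℤ)
    (hupd : ∀ x j : ℕ, 1 ≤ j → j ≤ k → a 1 ≤ x → x < n →
      St (x + j - 1) x =
        if j = 1 then St (x + j - 2) (x - a 1)
        else op (St (x + j - 2) x) (St (x + j - 2) (x - a j)))
    (hframe : ∀ i x : ℕ, 1 ≤ i →
      (¬ ∃ j : ℕ, 1 ≤ j ∧ j ≤ k ∧ i = x + j - 1 ∧ a 1 ≤ x ∧ x < n) →
      St i x = St (i - 1) x) :
    (∀ m j : ℕ, 1 ≤ j → a 1 ≤ m → (m + j - 1) - j + 1 = m) ∧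
    (∀ m j : ℕ, 1 ≤ j → j ≤ k → a 1 ≤ m → (m - a j) + k - 1 < m + j - 1) ∧
    (∀ m : ℕ, a 1 ≤ m → m < n →
      St (m + k - 1) m = loopST op (fun t => St (m + k - 1) (m - a t)) k) := by
  have ha1 : 0 < a 1 := hpos 1 le_rfl hk
  have hlow : ∀ d j : ℕ, 1 ≤ j → j + d = k → d + 1 ≤ a j := by
    intro d
    induction d with
    | zero => intro j h1 hjk; have := hpos j h1 (by omega); omega
    | succ d ih =>
      intro j h1 hjk
      have h2 := ih (j + 1) (by omega) (by omega)
      have h3 := hdec j h1 (by omega)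
      omega
  have hbound : ∀ j : ℕ, 1 ≤ j → j ≤ k → k + 1 ≤ a j + j := by
    intro j h1 h2
    have := hlow (k - j) j h1 (by omega)
    omega
  have hmono : ∀ j : ℕ, 1 ≤ j → j ≤ k → a j ≤ a 1 := by
    intro j h1 h2
    induction j with
    | zero => omega
    | succ j ih =>
      rcases Nat.eq_zero_or_pos j with h | hj
      · subst h; exact le_rfl
      · have := ih hj (by omega)
        have := hdec j hj (by omega)
        omega
  have stab : ∀ y, y < n → ∀ d, St (y + k - 1 + d) y = St (y + k - 1) y := by
    intro y hyn d
    induction d with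
    | zero => rfl
    | succ d ih =>
      have h2 : ¬ ∃ j : ℕ, 1 ≤ j ∧ j ≤ k ∧ y + k - 1 + (d + 1) = y + j - 1 ∧ a 1 ≤ y ∧ y < n := by
        rintro ⟨j, hj1, hjk, heq, hya, -⟩
        omega
      have h := hframe (y + k - 1 + (d + 1)) y (by omega) h2
      have e : y + k - 1 + (d + 1) - 1 = y + k - 1 + d := by omega
      rw [e] at h
      rw [h, ih]
  have stab' : ∀ y i i', y < n → y + k - 1 ≤ i → y + k - 1 ≤ i' → St i y = St i' y := by
    intro y i i' hyn hi hi'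
    obtain ⟨d, rfl⟩ := Nat.exists_eq_add_of_le hi
    obtain ⟨d', rfl⟩ := Nat.exists_eq_add_of_le hi'
    rw [stab y hyn d, stab y hyn d']
  have main : ∀ m, a 1 ≤ m → m < n → ∀ j, 1 ≤ j → j ≤ k →
      St (m + j - 1) m = loopST op (fun t => St (m + k - 1) (m - a t)) j := by
    intro m hm hmn j
    induction j with
    | zero => intro h1 _; omega
    | succ j ih =>
      intro h1 hjk
      rcases Nat.eq_zero_or_pos j with h | hj
      · subst h
        have hu := hupd m 1 le_rfl hk hm hmn
        rw [if_pos rfl] at hu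
        have hk1 : k ≤ a 1 := by have := hbound 1 le_rfl hk; omega
        have hread : St (m + 1 - 2) (m - a 1) = St (m + k - 1) (m - a 1) := by
          apply stab' _ _ _ (by omega) (by omega) (by omega)
        rw [hu, hread]
        rfl
      · obtain ⟨i, rfl⟩ : ∃ i, j = i + 1 := ⟨j - 1, by omega⟩
        have hu := hupd m (i + 2) (by omega) (by omega) hm hmn
        rw [if_neg (by omega)] at hu
        have hb := hbound (i + 2) (by omega) (by omega)
        have hmn2 := hmono (i + 2) (by omega) (by omega)
        have hread : St (m + (i + 2) - 2) (m - a (i + 2)) = St (m + k - 1) (m - a (i + 2)) := by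
          apply stab' _ _ _ (by omega) (by omega) (by omega)
        have e : m + (i + 2) - 2 = m + (i + 1) - 1 := by omega
        rw [e] at hu hread
        have e2 : m + (i + 1 + 1) - 1 = m + (i + 2) - 1 := rfl
        rw [e2, hu, hread, ih (by omega) (by omega)]
        rfl
  refine ⟨?_, ?_, ?_⟩
  · intro m j h1 hm; omega
  · intro m j h1 h2 hm
    have := hbound j h1 h2
    have := hmono j h1 h2
    omega
  · intro m hm hmn
    exact main m hm hmn k hk le_rfl
end
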